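/- Let n ≥ 1 and let R = ℂ[x₁,…,x_n]. Let φ^{(1)},…,φ^{(n)} ∈ Mat_{2×2}(R) be pairwise commuting matrices with φ^{(h)}_{11} = 0 for every h, with φ^{(1)} ≠ 0, and such that for every nonzero φ^{(h)} every common divisor of its four entries is a unit of R. If det φ^{(1)} ≠ 0, then ∑_{h=1}^n I_{φ^{(h)}} is the principal ideal of R[z₁,z₂] generated by the single quadric φ^{(1)}_{21} z₁² + φ^{(1)}_{22} z₁z₂ − φ^{(1)}_{12} z₂², i.e. ∑_{h=1}^n I_{φ^{(h)}} = I_{φ^{(1)}}. -/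

import Mathlib

open MvPolynomial

/-- The ideal `I_M` of `R[z₁,z₂]` generated by
`M_{21} z₁² + (M_{22} − M_{11}) z₁z₂ − M_{12} z₂² = ∑ₖ z_k (M_{2k} z₁ − M_{1k} z₂)`. -/
noncomputable def higgsIdeal {R : Type*} [CommRing R]
    (M : Matrix (Fin 2) (Fin 2) R) : Ideal (MvPolynomial (Fin 2) R) :=
  Ideal.span { p | ∃ i j : Fin 2, i < j ∧
    p = ∑ k : Fin 2, X k * (C (M j k) * X i - C (M i k) * X j) }

lemma aux_dvd {R : Type*} [CommRing R] [IsDomain R] [UniqueFactorizationMonoid R]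
    (b c d b' : R) (hu : ∀ g : R, g ∣ b → g ∣ c → g ∣ d → IsUnit g)
    (e1 : b ∣ b' * c) (e2 : b ∣ b' * d) : b ∣ b' := by
  classical
  letI : StrongNormalizationMonoid R := UniqueFactorizationMonoid.strongNormalizationMonoid
  letI : StrongNormalizedGCDMonoid R := UniqueFactorizationMonoid.toStrongNormalizedGCDMonoid R
  have h1 : b ∣ normalize b' * gcd c d := by
    rw [← gcd_mul_left]; exact dvd_gcd e1 e2
  have h2 : b ∣ b' * gcd c d :=
    h1.trans ((normalize_associated b').mul_right (gcd c d)).dvd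
  have h3 : b ∣ gcd (b' * b) (b' * gcd c d) := dvd_gcd (dvd_mul_left b b') h2
  rw [gcd_mul_left] at h3
  have hg : IsUnit (gcd b (gcd c d)) :=
    hu _ (gcd_dvd_left _ _) ((gcd_dvd_right _ _).trans (gcd_dvd_left _ _))
      ((gcd_dvd_right _ _).trans (gcd_dvd_right _ _))
  exact h3.trans ((associated_mul_unit_left _ _ hg).trans (normalize_associated b')).dvd

lemma higgsIdeal_eq_span {R : Type*} [CommRing R] (M : Matrix (Fin 2) (Fin 2) R) :
    higgsIdeal M = Ideal.span
      {∑ k : Fin 2, X k * (C (M 1 k) * X 0 - C (M 0 k) * X 1)} := by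
  unfold higgsIdeal
  congr 1
  ext p
  constructor
  · rintro ⟨i, j, hij, rfl⟩
    fin_cases i <;> fin_cases j <;> simp_all
  · rintro rfl
    exact ⟨0, 1, by decide, rfl⟩

/-- Proposition 5.2, case `det φ⁽¹⁾ ≠ 0`: for pairwise commuting `2×2` Higgs-field
matrices over `ℂ[x₁,…,x_n]` with vanishing `(1,1)`-entries, primitive entries, and
`φ⁽¹⁾ ≠ 0` with `det φ⁽¹⁾ ≠ 0`, the ideal `∑ₕ I_{φ⁽ʰ⁾}` is principal, generated by
`φ⁽¹⁾₂₁ z₁² + φ⁽¹⁾₂₂ z₁z₂ − φ⁽¹⁾₁₂ z₂²`; i.e. it equals `I_{φ⁽¹⁾}`. -/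
theorem stmt12 (n : ℕ) (hn : 1 ≤ n)
    (φ : Fin n → Matrix (Fin 2) (Fin 2) (MvPolynomial (Fin n) ℂ))
    (hcomm : ∀ h h', Commute (φ h) (φ h'))
    (h11 : ∀ h, φ h 0 0 = 0)
    (hφ1 : φ ⟨0, hn⟩ ≠ 0)
    (hgcd : ∀ h, φ h ≠ 0 → ∀ g : MvPolynomial (Fin n) ℂ,
      (∀ i j : Fin 2, g ∣ φ h i j) → IsUnit g)
    (hdet : (φ ⟨0, hn⟩).det ≠ 0) :
    (∑ h, higgsIdeal (φ h)) =
      Ideal.span {C (φ ⟨0, hn⟩ 1 0) * X 0 ^ 2 + C (φ ⟨0, hn⟩ 1 1) * X 0 * X 1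
        - C (φ ⟨0, hn⟩ 0 1) * X 1 ^ 2} ∧
    (∑ h, higgsIdeal (φ h)) = higgsIdeal (φ ⟨0, hn⟩) := by
  set A := φ ⟨0, hn⟩ with hA
  have hA00 : A 0 0 = 0 := h11 _
  -- b ≠ 0
  rw [Matrix.det_fin_two, hA00] at hdet
  have hb : A 0 1 ≠ 0 := by
    intro h; apply hdet; rw [h]; ring
  set b := A 0 1
  set c := A 1 0
  set d := A 1 1
  have hu : ∀ g : MvPolynomial (Fin n) ℂ, g ∣ b → g ∣ c → g ∣ d → IsUnit g := by
    intro g h1 h2 h3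
    refine hgcd ⟨0, hn⟩ hφ1 g ?_
    intro i j
    fin_cases i <;> fin_cases j <;> simp_all [hA00, b, c, d]
  -- main claim: each ideal is contained in higgsIdeal A
  have hle : ∀ h, higgsIdeal (φ h) ≤ higgsIdeal A := by
    intro h
    set B := φ h with hB
    have hB00 : B 0 0 = 0 := h11 h
    have e1 : b * B 1 0 = B 0 1 * c := by
      have := congrFun (congrFun (hcomm ⟨0, hn⟩ h).eq 0) 0
      simpa [Matrix.mul_apply, Fin.sum_univ_two, hA00, hB00, ← hA, ← hB] using this
    have e2 : b * B 1 1 = B 0 1 * d := by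
      have := congrFun (congrFun (hcomm ⟨0, hn⟩ h).eq 0) 1
      simpa [Matrix.mul_apply, Fin.sum_univ_two, hA00, hB00, ← hA, ← hB] using this
    obtain ⟨r, hr⟩ : b ∣ B 0 1 :=
      aux_dvd b c d (B 0 1) hu ⟨B 1 0, e1.symm⟩ ⟨B 1 1, e2.symm⟩
    have hc' : B 1 0 = r * c := by
      apply mul_left_cancel₀ hb
      rw [e1, hr]; ring
    have hd' : B 1 1 = r * d := by
      apply mul_left_cancel₀ hb
      rw [e2, hr]; ring
    rw [higgsIdeal_eq_span, higgsIdeal_eq_span, Ideal.span_le]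
    rintro p rfl
    have : (∑ k : Fin 2, X k * (C (B 1 k) * X 0 - C (B 0 k) * X 1)) =
        C r * ∑ k : Fin 2, X k * (C (A 1 k) * X 0 - C (A 0 k) * X 1) := by
      rw [Fin.sum_univ_two, Fin.sum_univ_two, hB00, hA00, hc', hd', hr]
      simp only [map_mul, map_zero]
      ring
    rw [this]
    exact Ideal.mul_mem_left _ _ (Ideal.subset_span rfl)
  have hge : higgsIdeal A ≤ ∑ h, higgsIdeal (φ h) := by
    have := Finset.single_le_sum (f := fun h => higgsIdeal (φ h))
      (fun i _ => zero_le) (Finset.mem_univ ⟨0, hn⟩)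
    simpa [← hA] using this
  have hsum : (∑ h, higgsIdeal (φ h)) = higgsIdeal A := by
    refine le_antisymm ?_ hge
    refine Finset.sum_induction _ (· ≤ higgsIdeal A) (fun a b ha hb => ?_) bot_le
      (fun h _ => hle h)
    rw [Submodule.add_eq_sup]
    exact sup_le ha hb
  refine ⟨?_, hsum⟩
  rw [hsum, higgsIdeal_eq_span]
  congr 1
  rw [Set.singleton_eq_singleton_iff]
  rw [Fin.sum_univ_two, hA00]
  simp only [map_zero]
  ring
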